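/- For every real number L ≥ 0, the improper integral ∫_{2√L}^{∞} exp(−x²/(4(L + x))) dx is at most 2√L + 4. -/

import Mathlib

set_option maxHeartbeats 1000000

open MeasureTheory

/-- For every real `L ≥ 0`, `∫_{2√L}^∞ exp(−x²/(4(L + x))) dx ≤ 2√L + 4`. -/
theorem stmt9 (L : ℝ) (hL : 0 ≤ L) :
    (∫ x in Set.Ici (2 * Real.sqrt L), Real.exp (-(x ^ 2) / (4 * (L + x))))
      ≤ 2 * Real.sqrt L + 4 := by
  set s := Real.sqrt L with hs
  have hs0 : 0 ≤ s := Real.sqrt_nonneg L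
  have hL' : s ^ 2 = L := Real.sq_sqrt hL
  set b : ℝ := 1 / (2 * (s + 2)) with hb
  have hbpos : 0 < b := by positivity
  -- pointwise bound
  have key : ∀ x ∈ Set.Ici (2 * s),
      Real.exp (-(x ^ 2) / (4 * (L + x))) ≤ Real.exp (-b * x) := by
    intro x hx
    simp only [Set.mem_Ici] at hx
    have hx0 : 0 ≤ x := le_trans (by positivity) hx
    apply Real.exp_le_exp.mpr
    rcases eq_or_lt_of_le hx0 with h0 | h0
    · -- x = 0, forces s = 0 and L = 0
      have hsx : s = 0 := le_antisymm (by nlinarith) hs0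
      have hL0 : L = 0 := by rw [← hL', hsx]; ring
      rw [← h0, hL0]; norm_num
    · have hden : 0 < 4 * (L + x) := by positivity
      rw [neg_mul, neg_div, neg_le_neg_iff, le_div_iff₀ hden]
      have e : x ^ 2 - b * x * (4 * (L + x)) = 2 * b * (s * x * (x - 2 * s)) := by
        rw [← hL', hb]; field_simp; ring
      nlinarith [mul_nonneg (mul_nonneg hs0 h0.le) (sub_nonneg.mpr hx), hbpos]
  have hg_int : IntegrableOn (fun x => Real.exp (-b * x)) (Set.Ici (2 * s)) :=
    Iff.mpr integrableOn_Ici_iff_integrableOn_Ioi (exp_neg_integrableOn_Ioi _ hbpos)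
  have hf_meas : Measurable fun x : ℝ => Real.exp (-(x ^ 2) / (4 * (L + x))) :=
    Real.measurable_exp.comp (((measurable_id.pow_const 2).neg).div
      ((measurable_const.add measurable_id).const_mul 4))
  have hf_int : IntegrableOn (fun x : ℝ => Real.exp (-(x ^ 2) / (4 * (L + x))))
      (Set.Ici (2 * s)) := by
    refine hg_int.mono' hf_meas.aestronglyMeasurable ?_
    filter_upwards [ae_restrict_mem measurableSet_Ici] with x hx
    rw [Real.norm_eq_abs, abs_of_pos (Real.exp_pos _)]
    exact key x hx
  calc (∫ x in Set.Ici (2 * s), Real.exp (-(x ^ 2) / (4 * (L + x))))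
      ≤ ∫ x in Set.Ici (2 * s), Real.exp (-b * x) :=
        setIntegral_mono_on hf_int hg_int measurableSet_Ici key
    _ = ∫ x in Set.Ioi (2 * s), Real.exp (-b * x) := integral_Ici_eq_integral_Ioi
    _ = ∫ x in Set.Ioi (2 * s), Real.exp (-(b * x)) := by simp only [neg_mul]
    _ = b⁻¹ • ∫ x in Set.Ioi (b * (2 * s)), Real.exp (-x) :=
        integral_comp_mul_left_Ioi (fun y => Real.exp (-y)) _ hbpos
    _ = b⁻¹ * Real.exp (-(b * (2 * s))) := by rw [integral_exp_neg_Ioi, smul_eq_mul]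
    _ ≤ b⁻¹ * 1 := by
        have : Real.exp (-(b * (2 * s))) ≤ 1 := by
          apply Real.exp_le_one_iff.mpr
          nlinarith
        exact mul_le_mul_of_nonneg_left this (by positivity)
    _ = 2 * s + 4 := by rw [hb]; field_simp; ring
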